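/- Let R be the mod p Dyer–Lashof algebra for an odd prime p. Then the left ideal I of R generated by the set {βQ^s : s ≥ 1} is also a right ideal, i.e. a two-sided ideal. Consequently, any admissible monomial Q^I containing at least one Bockstein β lies in the left ideal generated by the βQ^s. -/

import Mathlib

/-!
STATEMENT 8: In the mod `p` Dyer–Lashof algebra (`p` an odd prime), the left ideal
generated by `{βQ^s : s ≥ 1}` is also a right ideal; consequently every admissible
monomial containing at least one Bockstein lies in this left ideal.
-/

noncomputable section

variable (p : ℕ)

/-- Generators `β^εQ^s` of the Dyer–Lashof algebra: `(ε, s)` with `ε : Bool`. -/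
abbrev DLGen : Type := Bool × ℕ

/-- The free associative `F_p`-algebra on the symbols `β^εQ^s`. -/
abbrev FreeO (p : ℕ) : Type := FreeAlgebra (ZMod p) DLGen

/-- The generator `β^εQ^s`. -/
def gen (p : ℕ) (ε : Bool) (s : ℕ) : FreeO p := FreeAlgebra.ι (ZMod p) (ε, s)

/-- `deg β^εQ^s = 2s(p-1) - ε`. -/
def gdeg (p : ℕ) (g : DLGen) : ℤ := 2 * g.2 * ((p : ℤ) - 1) - (if g.1 then 1 else 0)

/-- The homogeneous component of degree `n` of the free algebra. -/
def HcompO (p : ℕ) (n : ℤ) : Submodule (ZMod p) (FreeO p) :=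
  Submodule.span (ZMod p)
    {w | ∃ L : List DLGen, (L.map (gdeg p)).sum = n ∧
      w = (L.map fun g => gen p g.1 g.2).prod}

/-- The binomial coefficient `(i, j) = (i+j)!/(i!·j!)` mod `p`, zero if `i < 0` or `j < 0`. -/
def bin (p : ℕ) (a b : ℤ) : ZMod p :=
  if 0 ≤ a ∧ 0 ≤ b then ((a + b).toNat.choose a.toNat : ZMod p) else 0

/-- The Adem elements `𝒜^{(ε,r,0,s)}`, `r > ps`. -/
def ademSetO1 (p : ℕ) : Set (FreeO p) :=
  {x | ∃ (ε : Bool) (r s : ℕ), p * s < r ∧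
    x = gen p ε r * gen p false s -
      ∑ i ∈ Finset.range (r + s + 1),
        (((-1 : ZMod p) ^ (r + i)) *
          bin p ((p : ℤ) * i - r) ((r : ℤ) - ((p : ℤ) - 1) * s - i - 1)) •
          (gen p ε (r + s - i) * gen p false i)}

/-- The Adem elements `𝒜^{(0,r,1,s)}`, `r ≥ ps`. -/
def ademSetO2 (p : ℕ) : Set (FreeO p) :=
  {x | ∃ (r s : ℕ), p * s ≤ r ∧
    x = gen p false r * gen p true s -
      (∑ i ∈ Finset.range (r + s + 1),
        (((-1 : ZMod p) ^ (r + i)) *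
          bin p ((p : ℤ) * i - r) ((r : ℤ) - ((p : ℤ) - 1) * s - i)) •
          (gen p true (r + s - i) * gen p false i) -
       ∑ i ∈ Finset.range (r + s + 1),
        (((-1 : ZMod p) ^ (r + i)) *
          bin p ((p : ℤ) * i - r - 1) ((r : ℤ) - ((p : ℤ) - 1) * s - i)) •
          (gen p false (r + s - i) * gen p true i))}

/-- The Adem elements `𝒜^{(1,r,1,s)}`, `r ≥ ps`. -/
def ademSetO3 (p : ℕ) : Set (FreeO p) :=
  {x | ∃ (r s : ℕ), p * s ≤ r ∧
    x = gen p true r * gen p true s +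
      ∑ i ∈ Finset.range (r + s + 1),
        (((-1 : ZMod p) ^ (r + i)) *
          bin p ((p : ℤ) * i - r - 1) ((r : ℤ) - ((p : ℤ) - 1) * s - i)) •
          (gen p true (r + s - i) * gen p true i)}

/-- The unstable relations `β^εQ^s·x` for `2s - ε < deg x`, together with `βQ^0`. -/
def unstableSetO (p : ℕ) : Set (FreeO p) :=
  {x | ∃ (ε : Bool) (s : ℕ) (n : ℤ) (w : FreeO p), w ∈ HcompO p n ∧
      2 * (s : ℤ) - (if ε then 1 else 0) < n ∧ x = gen p ε s * w} ∪
    {gen p true 0}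

def dlRelO (p : ℕ) : FreeO p → FreeO p → Prop := fun x y =>
  (x ∈ ademSetO1 p ∪ ademSetO2 p ∪ ademSetO3 p ∪ unstableSetO p) ∧ y = 0

/-- The mod `p` Dyer–Lashof algebra. -/
abbrev DLO (p : ℕ) := RingQuot (dlRelO p)

def dlMkO (p : ℕ) : FreeO p →ₐ[ZMod p] DLO p := RingQuot.mkAlgHom (ZMod p) (dlRelO p)

/-- Admissibility: `s_i ≤ p·s_{i-1} - ε_{i-1}`. -/
def AdmissibleO (p : ℕ) (L : List DLGen) : Prop :=
  List.Chain' (fun a b => (b.2 : ℤ) ≤ (p : ℤ) * a.2 - (if a.1 then 1 else 0)) L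

namespace DLAux

variable {p : ℕ}

/-- The generating set of the left ideal. -/
def genSet (p : ℕ) : Set (DLO p) :=
  {x : DLO p | ∃ s : ℕ, 1 ≤ s ∧ x = dlMkO p (gen p true s)}

lemma mk_rel_zero {x : FreeO p}
    (h : x ∈ ademSetO1 p ∪ ademSetO2 p ∪ ademSetO3 p ∪ unstableSetO p) :
    dlMkO p x = 0 := by
  have h0 : dlMkO p x = dlMkO p 0 :=
    RingQuot.mkAlgHom_rel (ZMod p) (⟨h, rfl⟩ : dlRelO p x 0)
  simpa using h0

lemma beta0 : dlMkO p (gen p true 0) = 0 :=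
  mk_rel_zero (Or.inr (Or.inr rfl))

lemma unstable_zero (ε : Bool) (s : ℕ) (ε' : Bool) (t : ℕ)
    (h : 2 * (s : ℤ) - (if ε then 1 else 0) < gdeg p (ε', t)) :
    dlMkO p (gen p ε s * gen p ε' t) = 0 := by
  apply mk_rel_zero
  refine Or.inr (Or.inl ⟨ε, s, gdeg p (ε', t), gen p ε' t, ?_, h, rfl⟩)
  exact Submodule.subset_span ⟨[(ε', t)], by simp, by simp⟩

lemma bin_zero_left {m : ℤ} (hm : 0 ≤ m) : bin p 0 m = 1 := by
  simp [bin, hm]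

lemma bin_neg_left {a b : ℤ} (ha : a < 0) : bin p a b = 0 := by
  rw [bin, if_neg]; rintro ⟨h1, _⟩; omega

lemma smul_mem_span (c : ZMod p) {x : DLO p} {S : Set (DLO p)} (hx : x ∈ Ideal.span S) :
    c • x ∈ Ideal.span S := by
  rw [Algebra.smul_def]; exact Ideal.mul_mem_left _ _ hx

lemma gen_mem (s : ℕ) (hs : 1 ≤ s) : dlMkO p (gen p true s) ∈ Ideal.span (genSet p) :=
  Submodule.subset_span ⟨s, hs, rfl⟩

lemma mul_beta_mem (y : DLO p) (s : ℕ) (hs : 1 ≤ s) :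
    y * dlMkO p (gen p true s) ∈ Ideal.span (genSet p) :=
  Ideal.mul_mem_left _ _ (gen_mem s hs)

lemma adem1_true (s t : ℕ) (h : p * t < s) :
    dlMkO p (gen p true s * gen p false t) =
      ∑ i ∈ Finset.range (s + t + 1),
        (((-1 : ZMod p) ^ (s + i)) *
          bin p ((p : ℤ) * i - s) ((s : ℤ) - ((p : ℤ) - 1) * t - i - 1)) •
          dlMkO p (gen p true (s + t - i) * gen p false i) := by
  have h0 := mk_rel_zero (p := p) (Or.inl (Or.inl (Or.inl ⟨true, s, t, h, rfl⟩)))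
  rw [map_sub, sub_eq_zero, map_sum] at h0
  simpa only [map_smul] using h0

lemma adem2 (r u : ℕ) (h : p * u ≤ r) :
    dlMkO p (gen p false r * gen p true u) =
      (∑ i ∈ Finset.range (r + u + 1),
        (((-1 : ZMod p) ^ (r + i)) *
          bin p ((p : ℤ) * i - r) ((r : ℤ) - ((p : ℤ) - 1) * u - i)) •
          dlMkO p (gen p true (r + u - i) * gen p false i)) -
      (∑ i ∈ Finset.range (r + u + 1),
        (((-1 : ZMod p) ^ (r + i)) *
          bin p ((p : ℤ) * i - r - 1) ((r : ℤ) - ((p : ℤ) - 1) * u - i)) •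
          dlMkO p (gen p false (r + u - i) * gen p true i)) := by
  have h0 := mk_rel_zero (p := p) (Or.inl (Or.inl (Or.inr ⟨r, u, h, rfl⟩)))
  rw [map_sub, sub_eq_zero, map_sub, map_sum, map_sum] at h0
  simpa only [map_smul] using h0

/-- The core computation: `βQ^s · Q^t` lies in the left ideal generated by the `βQ^u`. -/
lemma core [Fact p.Prime] (hp : Odd p) :
    ∀ s t : ℕ, dlMkO p (gen p true s * gen p false t) ∈ Ideal.span (genSet p) := by
  have hp2 : 2 ≤ p := (Fact.out : p.Prime).two_le
  intro s
  induction s using Nat.strong_induction_on with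
  | _ s IH =>
    intro t
    rcases le_or_gt s ((p - 1) * t) with hcase1 | hcase1
    · -- unstable: `s ≤ (p-1)t`, the product is zero
      have hz : dlMkO p (gen p true s * gen p false t) = 0 := by
        apply unstable_zero
        have hc : (s : ℤ) ≤ ((p : ℤ) - 1) * t := by
          have := (Nat.cast_le (α := ℤ)).2 hcase1
          push_cast [Nat.cast_sub (by omega : 1 ≤ p)] at this
          linarith
        norm_num [gdeg]
        nlinarith
      rw [hz]; exact zero_mem _
    · rcases le_or_gt s (p * t) with hcase2 | hcase2
      · -- middle case: `(p-1)t < s ≤ pt`; use the Adem relation `Q^{pt}βQ^{s-(p-1)t}`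
        have hpt : (p - 1) * t + t = p * t := by
          obtain ⟨k, rfl⟩ : ∃ k, p = k + 1 := ⟨p - 1, by omega⟩
          simp [Nat.add_mul]
        set R := p * t with hR
        set U := s - (p - 1) * t with hU
        have hU1 : 1 ≤ U := by omega
        have hUt : U ≤ t := by omega
        have hRU : R + U = s + t := by omega
        have hrel := adem2 (p := p) R U (by
          calc p * U ≤ p * t := Nat.mul_le_mul_left p hUt
          _ = R := rfl)
        -- the left side and the second sum are in the ideal
        have hlhs : dlMkO p (gen p false R * gen p true U) ∈ Ideal.span (genSet p) := by
          rw [map_mul]; exact mul_beta_mem _ _ hU1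
        have hdsum : (∑ i ∈ Finset.range (R + U + 1),
            (((-1 : ZMod p) ^ (R + i)) *
              bin p ((p : ℤ) * i - R - 1) ((R : ℤ) - ((p : ℤ) - 1) * U - i)) •
              dlMkO p (gen p false (R + U - i) * gen p true i)) ∈ Ideal.span (genSet p) := by
          refine Submodule.sum_mem _ fun i _ => ?_
          rcases Nat.eq_zero_or_pos i with rfl | hi
          · rw [map_mul, beta0, mul_zero, smul_zero]; exact zero_mem _
          · refine smul_mem_span _ ?_
            rw [map_mul]; exact mul_beta_mem _ _ hi
        have hcsum : (∑ i ∈ Finset.range (R + U + 1),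
            (((-1 : ZMod p) ^ (R + i)) *
              bin p ((p : ℤ) * i - R) ((R : ℤ) - ((p : ℤ) - 1) * U - i)) •
              dlMkO p (gen p true (R + U - i) * gen p false i)) ∈ Ideal.span (genSet p) := by
          have : (∑ i ∈ Finset.range (R + U + 1),
              (((-1 : ZMod p) ^ (R + i)) *
                bin p ((p : ℤ) * i - R) ((R : ℤ) - ((p : ℤ) - 1) * U - i)) •
                dlMkO p (gen p true (R + U - i) * gen p false i)) =
              dlMkO p (gen p false R * gen p true U) +
              (∑ i ∈ Finset.range (R + U + 1),
                (((-1 : ZMod p) ^ (R + i)) *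
                  bin p ((p : ℤ) * i - R - 1) ((R : ℤ) - ((p : ℤ) - 1) * U - i)) •
                  dlMkO p (gen p false (R + U - i) * gen p true i)) := by
            rw [hrel]; abel
          rw [this]; exact add_mem hlhs hdsum
        -- extract the `i = t` term
        set f : ℕ → DLO p := fun i =>
          (((-1 : ZMod p) ^ (R + i)) *
            bin p ((p : ℤ) * i - R) ((R : ℤ) - ((p : ℤ) - 1) * U - i)) •
            dlMkO p (gen p true (R + U - i) * gen p false i) with hf
        have ht_mem : t ∈ Finset.range (R + U + 1) := by
          simp only [Finset.mem_range]; omega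
        have hsplit := Finset.add_sum_erase (Finset.range (R + U + 1)) f ht_mem
        have herase : (∑ i ∈ (Finset.range (R + U + 1)).erase t, f i) ∈
            Ideal.span (genSet p) := by
          refine Submodule.sum_mem _ fun i hi => ?_
          obtain ⟨hne, hir⟩ := Finset.mem_erase.1 hi
          rcases lt_or_gt_of_ne hne with hlt | hgt
          · -- `i < t`: the coefficient vanishes
            have hb : bin p ((p : ℤ) * i - R) ((R : ℤ) - ((p : ℤ) - 1) * U - i) = 0 := by
              apply bin_neg_left
              have h1 : (i : ℤ) < t := by exact_mod_cast hlt
              have h2 : ((R : ℕ) : ℤ) = (p : ℤ) * t := by push_cast [hR]; ring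
              have hp0 : (0 : ℤ) < p := by positivity
              nlinarith
            rw [hf]; simp only [hb, mul_zero, zero_smul]; exact zero_mem _
          · -- `i > t`: induction hypothesis
            rw [hf]
            exact smul_mem_span _ (IH (R + U - i) (by omega) i)
        have hft : f t ∈ Ideal.span (genSet p) := by
          rw [eq_sub_of_add_eq hsplit]; exact sub_mem hcsum herase
        -- identify `f t` with the target
        have hUZ : ((U : ℕ) : ℤ) = (s : ℤ) - ((p : ℤ) - 1) * t := by
          have h1 : ((p - 1) * t : ℕ) ≤ s := by omega
          push_cast [hU, Nat.cast_sub h1, Nat.cast_sub (by omega : 1 ≤ p)]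
          ring
        have hRZ : ((R : ℕ) : ℤ) = (p : ℤ) * t := by push_cast [hR]; ring
        have e1 : (p : ℤ) * t - (R : ℤ) = 0 := by rw [hRZ]; ring
        have e2 : (0 : ℤ) ≤ (R : ℤ) - ((p : ℤ) - 1) * U - t := by
          have : (R : ℤ) - ((p : ℤ) - 1) * U - t = ((p : ℤ) - 1) * ((p : ℤ) * t - s) := by
            rw [hUZ, hRZ]; ring
          rw [this]
          have hs_le : (s : ℤ) ≤ (p : ℤ) * t := by exact_mod_cast hcase2
          have hp1 : (1 : ℤ) ≤ p := by exact_mod_cast (by omega : 1 ≤ p)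
          nlinarith
        have heven : Even (R + t) := by
          have h1 : R + t = (p + 1) * t := by rw [hR]; ring
          rw [h1]
          exact (hp.add_one).mul_right t
        have hcoef : ((-1 : ZMod p) ^ (R + t)) *
            bin p ((p : ℤ) * t - R) ((R : ℤ) - ((p : ℤ) - 1) * U - t) = 1 := by
          rw [e1, bin_zero_left e2, heven.neg_one_pow, one_mul]
        have hidx : R + U - t = s := by omega
        have : f t = dlMkO p (gen p true s * gen p false t) := by
          rw [hf]; simp only [hidx, hcoef, one_smul]
        rwa [this] at hft
      · -- `pt < s`: Adem relation of the first kind plus induction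
        have hrel := adem1_true (p := p) s t hcase2
        rw [hrel]
        refine Submodule.sum_mem _ fun i hi => ?_
        rcases le_or_gt i t with hle | hgt
        · have hb : bin p ((p : ℤ) * i - s) ((s : ℤ) - ((p : ℤ) - 1) * t - i - 1) = 0 := by
            apply bin_neg_left
            have h1 : (i : ℤ) ≤ t := by exact_mod_cast hle
            have h2 : ((p : ℤ) * t) < s := by exact_mod_cast hcase2
            have hp0 : (0 : ℤ) < p := by positivity
            nlinarith
          simp only [hb, mul_zero, zero_smul]; exact zero_mem _
        · exact smul_mem_span _ (IH (s + t - i) (by omega) i)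

end DLAux

theorem dyerLashof_odd_bockstein_left_ideal_is_right_ideal
    [Fact p.Prime] (hp : Odd p)
    (I : Ideal (DLO p))
    (hI : I = Ideal.span {x : DLO p | ∃ s : ℕ, 1 ≤ s ∧ x = dlMkO p (gen p true s)}) :
    -- the left ideal `I` is a two-sided ideal
    (∀ x ∈ I, ∀ r : DLO p, x * r ∈ I) ∧
    -- consequently, every admissible monomial containing a Bockstein lies in `I`
    (∀ L : List DLGen, AdmissibleO p L → (∃ g ∈ L, g.1 = true) →
      dlMkO p ((L.map fun g => gen p g.1 g.2).prod) ∈ I) := by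
  subst hI
  rw [show {x : DLO p | ∃ s : ℕ, 1 ≤ s ∧ x = dlMkO p (gen p true s)} = DLAux.genSet p from rfl]
  -- Step 1: multiplying an ideal element by a single generator stays in the ideal
  have hgenmul : ∀ x ∈ Ideal.span (DLAux.genSet p), ∀ g : DLGen,
      x * dlMkO p (gen p g.1 g.2) ∈ Ideal.span (DLAux.genSet p) := by
    intro x hx g
    induction hx using Submodule.span_induction with
    | mem y hy =>
        obtain ⟨s, hs, rfl⟩ := hy
        rw [← map_mul]
        match g with
        | (false, t) => exact DLAux.core hp s t
        | (true, 0) => rw [map_mul, DLAux.beta0, mul_zero]; exact zero_mem _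
        | (true, t + 1) =>
            rw [map_mul]; exact DLAux.mul_beta_mem _ _ (Nat.succ_le_succ (Nat.zero_le _))
    | zero => rw [zero_mul]; exact zero_mem _
    | add y z hy hz ihy ihz => rw [add_mul]; exact add_mem ihy ihz
    | smul a y hy ihy => rw [smul_mul_assoc]; exact Submodule.smul_mem _ _ ihy
  -- Step 2: multiplying by any element of the quotient algebra stays in the ideal
  have main : ∀ a : FreeO p, ∀ x ∈ Ideal.span (DLAux.genSet p),
      x * dlMkO p a ∈ Ideal.span (DLAux.genSet p) := by
    intro a
    refine FreeAlgebra.induction (ZMod p) DLGen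
      (motive := fun a => ∀ x ∈ Ideal.span (DLAux.genSet p),
        x * dlMkO p a ∈ Ideal.span (DLAux.genSet p)) ?_ ?_ ?_ ?_ a
    · intro c x hx
      rw [AlgHom.commutes, ← Algebra.commutes]
      exact Ideal.mul_mem_left _ _ hx
    · intro g x hx
      simpa [gen] using hgenmul x hx g
    · intro a b iha ihb x hx
      rw [map_mul, ← mul_assoc]
      exact ihb _ (iha x hx)
    · intro a b iha ihb x hx
      rw [map_add, mul_add]
      exact add_mem (iha x hx) (ihb x hx)
  have part1 : ∀ x ∈ Ideal.span (DLAux.genSet p), ∀ r : DLO p,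
      x * r ∈ Ideal.span (DLAux.genSet p) := by
    intro x hx r
    obtain ⟨a, rfl⟩ := RingQuot.mkAlgHom_surjective (ZMod p) (dlRelO p) r
    exact main a x hx
  refine ⟨part1, ?_⟩
  -- Step 3: admissible monomials containing a Bockstein
  intro L _hadm hbeta
  obtain ⟨g, hgL, hg⟩ := hbeta
  obtain ⟨L₁, L₂, rfl⟩ := List.append_of_mem hgL
  obtain ⟨ε, n⟩ := g
  cases hg
  rw [List.map_append, List.prod_append, List.map_cons, List.prod_cons, map_mul, map_mul]
  refine Ideal.mul_mem_left _ _ ?_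
  rcases Nat.eq_zero_or_pos n with rfl | hn
  · rw [DLAux.beta0, zero_mul]; exact zero_mem _
  · exact part1 _ (DLAux.gen_mem n hn) _

end
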